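/- For every $r \ge 1$ there exists an abstract pseudoline arrangement $\mathcal{A}$ on $3r$ pseudolines with $\chi_{pl}(\mathcal{A}) = 2 \cdot \chi(G_o(\mathcal{A}))$. Concretely: partition $3r$ pseudolines into $r$ strips of 3; within each strip the 3 pseudolines meet in one common crossing of degree 3, and any two pseudolines from different strips meet in an ordinary point. Then $G_o(\mathcal{A}) = K_{3,\dots,3}$ (complete $r$-partite) has chromatic number $r$, while a pseudoline coloring requires $2r$ colors (each degree-3 strip crossing needs two colors within its strip, and strips pairwise conflict). -/

import Mathlib

open Finset
open scoped Classical

/-- The number of pseudolines through a crossing. -/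
noncomputable def Deg (L C : Type) [Fintype L] (Inc : C → L → Prop) (c : C) : ℕ :=
  (Finset.univ.filter fun x => Inc c x).card

def PCross (r : ℕ) :=
  Fin r ⊕ {p : Fin (3*r) × Fin (3*r) // p.1 < p.2 ∧ p.1.val / 3 ≠ p.2.val / 3}

noncomputable instance (r : ℕ) : Fintype (PCross r) := by
  unfold PCross; infer_instance

def PInc (r : ℕ) : PCross r → Fin (3*r) → Prop
  | .inl s, l => l.val / 3 = s.val
  | .inr p, l => l = p.1.1 ∨ l = p.1.2

lemma deg_inl (r : ℕ) (s : Fin r) :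
    Deg (Fin (3*r)) (PCross r) (PInc r) (.inl s) = 3 := by
  have h0 : 3*s.val < 3*r := by omega
  have h1 : 3*s.val+1 < 3*r := by omega
  have h2 : 3*s.val+2 < 3*r := by omega
  have : (Finset.univ.filter fun x : Fin (3*r) => PInc r (.inl s) x) =
      {⟨3*s.val, h0⟩, ⟨3*s.val+1, h1⟩, ⟨3*s.val+2, h2⟩} := by
    ext x
    rw [Finset.mem_filter_univ]
    simp only [Finset.mem_filter, Finset.mem_univ, true_and, Finset.mem_insert,
      Finset.mem_singleton, PInc, Fin.ext_iff]
    omega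
  unfold Deg; rw [this]
  rw [Finset.card_insert_of_notMem (by simp [Fin.ext_iff] <;> omega),
    Finset.card_insert_of_notMem (by simp [Fin.ext_iff]), Finset.card_singleton]

lemma deg_inr (r : ℕ) (p) :
    Deg (Fin (3*r)) (PCross r) (PInc r) (.inr p) = 2 := by
  have : (Finset.univ.filter fun x : Fin (3*r) => PInc r (.inr p) x) =
      {p.1.1, p.1.2} := by
    ext x
    rw [Finset.mem_filter_univ]
    simp [PInc]
  unfold Deg; rw [this, Finset.card_insert_of_notMem, Finset.card_singleton]
  simp [p.2.1.ne]

theorem stmt_13 (r : ℕ) (hr : 1 ≤ r) :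
    ∃ (C : Type) (_ : Fintype C) (Inc : C → Fin (3 * r) → Prop),
      (∀ l₁ l₂ : Fin (3 * r), l₁ ≠ l₂ → ∃! c : C, Inc c l₁ ∧ Inc c l₂) ∧
      (∀ c : C, 2 ≤ Deg (Fin (3 * r)) C Inc c) ∧
      ∃ kpl kgo : ℕ, kpl = 2 * kgo ∧
        -- kpl is the pseudoline chromatic number
        (∃ col : Fin (3 * r) → Fin kpl,
          ∀ c : C, ∃ l₁ l₂, Inc c l₁ ∧ Inc c l₂ ∧ col l₁ ≠ col l₂) ∧
        (∀ (m : ℕ) (col : Fin (3 * r) → Fin m),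
          (∀ c : C, ∃ l₁ l₂, Inc c l₁ ∧ Inc c l₂ ∧ col l₁ ≠ col l₂) → kpl ≤ m) ∧
        -- kgo is the chromatic number of the ordinary graph
        (∃ gc : Fin (3 * r) → Fin kgo,
          ∀ l₁ l₂ : Fin (3 * r),
            (l₁ ≠ l₂ ∧ ∃ c : C, Inc c l₁ ∧ Inc c l₂ ∧ Deg (Fin (3 * r)) C Inc c = 2) →
            gc l₁ ≠ gc l₂) ∧
        (∀ (m : ℕ) (gc : Fin (3 * r) → Fin m),
          (∀ l₁ l₂ : Fin (3 * r),
            (l₁ ≠ l₂ ∧ ∃ c : C, Inc c l₁ ∧ Inc c l₂ ∧ Deg (Fin (3 * r)) C Inc c = 2) →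
            gc l₁ ≠ gc l₂) → kgo ≤ m) := by
  refine ⟨PCross r, inferInstance, PInc r, ?_, ?_, 2*r, r, rfl, ?_, ?_, ?_, ?_⟩
  · -- unique crossings
    intro l₁ l₂ hne
    by_cases hs : l₁.val / 3 = l₂.val / 3
    · have hlt : l₁.val / 3 < r := by omega
      refine ⟨.inl ⟨l₁.val / 3, hlt⟩, ⟨rfl, hs.symm⟩, ?_⟩
      rintro (s | p) ⟨h1, h2⟩
      · simp only [PInc] at h1 h2
        simp [Sum.inl.injEq, Fin.ext_iff, h1]
        rfl
      · simp only [PInc] at h1 h2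
        exfalso
        rcases h1 with h1 | h1 <;> rcases h2 with h2 | h2 <;>
          first
          | exact hne (h1.trans h2.symm)
          | (exact p.2.2 (by rw [← h1, ← h2]; omega))
    · rcases lt_trichotomy l₁ l₂ with hlt | heq | hlt
      · refine ⟨.inr ⟨(l₁, l₂), hlt, hs⟩, ⟨Or.inl rfl, Or.inr rfl⟩, ?_⟩
        rintro (s | p) ⟨h1, h2⟩
        · simp only [PInc] at h1 h2; exact absurd (h1.trans h2.symm) hs
        · simp only [PInc] at h1 h2
          rcases h1 with h1 | h1 <;> rcases h2 with h2 | h2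
          · exact absurd (h1.trans h2.symm) hne
          · subst h1 h2; rfl
          · exfalso
            have hp := p.2.1
            rw [← h1, ← h2] at hp
            exact absurd hlt (not_lt.mpr hp.le)
          · exact absurd (h1.trans h2.symm) hne
      · exact absurd heq hne
      · refine ⟨.inr ⟨(l₂, l₁), hlt, fun h => hs h.symm⟩, ⟨Or.inr rfl, Or.inl rfl⟩, ?_⟩
        rintro (s | p) ⟨h1, h2⟩
        · simp only [PInc] at h1 h2; exact absurd (h1.trans h2.symm) hs
        · simp only [PInc] at h1 h2
          rcases h1 with h1 | h1 <;> rcases h2 with h2 | h2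
          · exact absurd (h1.trans h2.symm) hne
          · exfalso
            have hp := p.2.1
            rw [← h1, ← h2] at hp
            exact absurd hlt (not_lt.mpr hp.le)
          · subst h1 h2; rfl
          · exact absurd (h1.trans h2.symm) hne
  · -- degree ≥ 2
    rintro (s | p)
    · rw [deg_inl]; omega
    · rw [deg_inr]
  · -- coloring with 2r colors
    have hb : ∀ l : Fin (3*r), 2*(l.val/3) + l.val % 3 % 2 < 2*r := by
      intro l; have := l.2; omega
    refine ⟨fun l => ⟨2*(l.val/3) + l.val % 3 % 2, hb l⟩, ?_⟩
    rintro (s | p)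
    · have h0 : 3*s.val < 3*r := by omega
      have h1 : 3*s.val+1 < 3*r := by omega
      refine ⟨⟨3*s.val, h0⟩, ⟨3*s.val+1, h1⟩, ?_, ?_, ?_⟩
      · show (3*s.val) / 3 = s.val; omega
      · show (3*s.val+1) / 3 = s.val; omega
      · simp [Fin.ext_iff]; omega
    · refine ⟨p.1.1, p.1.2, Or.inl rfl, Or.inr rfl, ?_⟩
      have := p.2.2
      simp only [ne_eq, Fin.mk.injEq]
      omega
  · -- lower bound 2r
    intro m col hcol
    set f : Fin r → Finset (Fin m) :=
      fun s => (Finset.univ.filter fun l : Fin (3*r) => l.val / 3 = s.val).image col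
        with hf
    have hf2 : ∀ s : Fin r, 2 ≤ (f s).card := by
      intro s
      obtain ⟨l₁, l₂, h1, h2, hne⟩ := hcol (.inl s)
      refine Finset.one_lt_card.mpr ⟨col l₁, ?_, col l₂, ?_, hne⟩ <;>
        · simp only [hf, Finset.mem_image, Finset.mem_filter, Finset.mem_univ, true_and]
          first
          | exact ⟨l₁, h1, rfl⟩
          | exact ⟨l₂, h2, rfl⟩
    have hdisj : ∀ s ∈ (Finset.univ : Finset (Fin r)), ∀ t ∈ Finset.univ, s ≠ t →
        Disjoint (f s) (f t) := by
      intro s _ t _ hst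
      rw [Finset.disjoint_left]
      intro x hxs hxt
      simp only [hf, Finset.mem_image, Finset.mem_filter, Finset.mem_univ, true_and] at hxs hxt
      obtain ⟨l₁, hl1, hc1⟩ := hxs
      obtain ⟨l₂, hl2, hc2⟩ := hxt
      have hsne : l₁.val / 3 ≠ l₂.val / 3 := by
        rw [hl1, hl2]; exact fun h => hst (Fin.ext h)
      have hne : l₁ ≠ l₂ := fun h => hsne (by rw [h])
      rcases lt_trichotomy l₁ l₂ with hlt | heq | hlt
      · obtain ⟨a, b, ha, hb, hab⟩ := hcol (.inr ⟨(l₁, l₂), hlt, hsne⟩)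
        simp only [PInc] at ha hb
        rcases ha with ha | ha <;> rcases hb with hb | hb <;>
          exact hab (by simp only [ha, hb, hc1, hc2])
      · exact hne heq
      · obtain ⟨a, b, ha, hb, hab⟩ := hcol (.inr ⟨(l₂, l₁), hlt, fun h => hsne h.symm⟩)
        simp only [PInc] at ha hb
        rcases ha with ha | ha <;> rcases hb with hb | hb <;>
          exact hab (by simp only [ha, hb, hc1, hc2])
    calc 2 * r = ∑ _s : Fin r, 2 := by simp [mul_comm]
      _ ≤ ∑ s : Fin r, (f s).card := Finset.sum_le_sum fun s _ => hf2 s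
      _ = ((Finset.univ : Finset (Fin r)).biUnion f).card :=
          (Finset.card_biUnion hdisj).symm
      _ ≤ (Finset.univ : Finset (Fin m)).card := Finset.card_le_univ _
      _ = m := by simp
  · -- r-coloring of ordinary graph
    have hb : ∀ l : Fin (3*r), l.val / 3 < r := by intro l; have := l.2; omega
    refine ⟨fun l => ⟨l.val / 3, hb l⟩, ?_⟩
    rintro l₁ l₂ ⟨hne, c, h1, h2, hdeg⟩
    rcases c with s | p
    · rw [deg_inl] at hdeg; omega
    · simp only [PInc] at h1 h2
      simp only [ne_eq, Fin.mk.injEq]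
      have := p.2.2
      rcases h1 with h1 | h1 <;> rcases h2 with h2 | h2 <;> subst h1 h2 <;>
        first
        | exact absurd rfl hne
        | omega
  · -- lower bound r
    intro m gc hgc
    have hrep : ∀ s : Fin r, 3*s.val < 3*r := by intro s; omega
    have hinj : Function.Injective (fun s : Fin r => gc ⟨3*s.val, hrep s⟩) := by
      intro s t hst
      by_contra hne
      have hsne : (⟨3*s.val, hrep s⟩ : Fin (3*r)).val / 3 ≠
          (⟨3*t.val, hrep t⟩ : Fin (3*r)).val / 3 := by
        simp only [ne_eq, Fin.ext_iff] at hne ⊢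
        omega
      have hlne : (⟨3*s.val, hrep s⟩ : Fin (3*r)) ≠ ⟨3*t.val, hrep t⟩ := by
        intro h; exact hsne (by rw [h])
      rcases lt_trichotomy (⟨3*s.val, hrep s⟩ : Fin (3*r)) ⟨3*t.val, hrep t⟩ with
        hlt | heq | hlt
      · exact hgc _ _ ⟨hlne, .inr ⟨(_, _), hlt, hsne⟩, Or.inl rfl, Or.inr rfl,
          deg_inr r _⟩ hst
      · exact hlne heq
      · exact hgc _ _ ⟨hlne, .inr ⟨(_, _), hlt, fun h => hsne h.symm⟩,
          Or.inr rfl, Or.inl rfl, deg_inr r _⟩ hst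
    have := Fintype.card_le_of_injective _ hinj
    simpa using this
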